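/- arXiv:math/0008057 — 4 statements merged into one kernel-verified Lean document; each statement's English description precedes it below -/
import Mathlib

section
/- Let Ω be a subset of the open unit disk D containing a point w₀ and at least one other point, and define S : Ω → ℂ by S(w₀) = 1 and S(z) = 0 for z ∈ Ω \ {w₀}. Then the Schur kernel K_S has exactly one negative square on Ω; that is, for every finite list of points z₁,…,z_m ∈ Ω the Hermitian m×m matrix (K_S(z_j,z_i))_{i,j=1}^m has at most one negative eigenvalue (counted with multiplicity), and for some finite list of points in Ω this matrix has exactly one negative eigenvalue. -/
open scoped Matrix ComplexConjugate

/-- The number of negative eigenvalues (with multiplicity) of a Hermitian complex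
matrix; junk value `0` if the matrix is not Hermitian. -/
noncomputable def negEig {n : Type*} [Fintype n] [DecidableEq n]
    (A : Matrix n n ℂ) : ℕ :=
  if h : A.IsHermitian then Nat.card {i // h.eigenvalues i < 0} else 0

/-- The number of positive eigenvalues (with multiplicity) of a Hermitian complex
matrix; junk value `0` if the matrix is not Hermitian. -/
noncomputable def posEig {n : Type*} [Fintype n] [DecidableEq n]
    (A : Matrix n n ℂ) : ℕ :=
  if h : A.IsHermitian then Nat.card {i // 0 < h.eigenvalues i} else 0

/-- The Schur kernel `K_S(w,z) = (1 - S(z) conj(S(w)))/(1 - z conj(w))`. -/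
noncomputable def schurKer (S : ℂ → ℂ) (w z : ℂ) : ℂ :=
  (1 - S z * conj (S w)) / (1 - z * conj w)

/-- A Hermitian kernel `K` has exactly `κ` negative squares on `Ω`. -/
def HasNegSquares (Ω : Set ℂ) (K : ℂ → ℂ → ℂ) (κ : ℕ) : Prop :=
  (∀ (m : ℕ) (z : Fin m → ℂ), (∀ i, z i ∈ Ω) →
      negEig (Matrix.of fun i j => K (z j) (z i)) ≤ κ) ∧
  (∃ (m : ℕ) (z : Fin m → ℂ), (∀ i, z i ∈ Ω) ∧
      negEig (Matrix.of fun i j => K (z j) (z i)) = κ)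

/-- The `r×r` lower triangular Toeplitz matrix built from `a₀, a₁, …`. -/
def Tmat (a : ℕ → ℂ) (r : ℕ) : Matrix (Fin r) (Fin r) ℂ :=
  Matrix.of fun i j => if (j : ℕ) ≤ i then a ((i : ℕ) - j) else 0

/-- The `r×r` lower triangular Toeplitz matrix built from `conj a₀, conj a₁, …`. -/
def Ttil (a : ℕ → ℂ) (r : ℕ) : Matrix (Fin r) (Fin r) ℂ :=
  Matrix.of fun i j => if (j : ℕ) ≤ i then conj (a ((i : ℕ) - j)) else 0

/-- The `r×r` Hankel matrix with entries `a_{i+j+1}`. -/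
def Qmat (a : ℕ → ℂ) (r : ℕ) : Matrix (Fin r) (Fin r) ℂ :=
  Matrix.of fun i j => a ((i : ℕ) + j + 1)

/-- The `m×m` lower triangular Toeplitz matrix built from `c₀, c₁, …`. -/
def Bmat (c : ℕ → ℂ) (m : ℕ) : Matrix (Fin m) (Fin m) ℂ :=
  Matrix.of fun i j => if (j : ℕ) ≤ i then c ((i : ℕ) - j) else 0

/-- The `m×m` lower triangular Toeplitz matrix built from `conj c₀, conj c₁, …`. -/
def Btil (c : ℕ → ℂ) (m : ℕ) : Matrix (Fin m) (Fin m) ℂ :=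
  Matrix.of fun i j => if (j : ℕ) ≤ i then conj (c ((i : ℕ) - j)) else 0

/-- The `m×m` Hermitian Toeplitz matrix built from `c₀, c₁, …`
(`M_r` of the paper has size `r+1`, i.e. it is `Mmat c (r+1)`). -/
def Mmat (c : ℕ → ℂ) (m : ℕ) : Matrix (Fin m) (Fin m) ℂ :=
  Matrix.of fun i j =>
    if (j : ℕ) ≤ i then c ((i : ℕ) - j) else conj (c ((j : ℕ) - i))

/-- The `m×m` flip matrix, with ones on the antidiagonal. -/
def Jmat (m : ℕ) : Matrix (Fin m) (Fin m) ℂ :=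
  Matrix.of fun i j => if (i : ℕ) + j + 1 = m then 1 else 0

/-- Identification of `Fin m` with `Fin p ⊕ Fin q` when `m = p + q`. -/
def splitAt {p q m : ℕ} (h : m = p + q) : Fin m → Fin p ⊕ Fin q :=
  fun i =>
    if h' : (i : ℕ) < p then Sum.inl ⟨i, h'⟩
    else Sum.inr ⟨(i : ℕ) - p, by have := i.isLt; omega⟩

/-- The `m×m` block diagonal matrix `diag(A, D)` with `A` of size `p` and `D` of
size `q`, where `m = p + q`. -/
def dblock {p q m : ℕ} (h : m = p + q)
    (A : Matrix (Fin p) (Fin p) ℂ) (D : Matrix (Fin q) (Fin q) ℂ) :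
    Matrix (Fin m) (Fin m) ℂ :=
  (Matrix.fromBlocks A 0 0 D).submatrix (splitAt h) (splitAt h)

/-- The sequence `c` belongs to the class `P_ν`: `ν(M_r) = ν` for all
sufficiently large `r`. -/
def memP (c : ℕ → ℂ) (ν : ℕ) : Prop :=
  ∃ N, ∀ r ≥ N, negEig (Mmat c (r + 1)) = ν

/-- The sequence `c` belongs to the class `P_{ν,π}`: `ν(M_r) = ν` and
`π(M_r) = π` for all sufficiently large `r`. -/
def memPP (c : ℕ → ℂ) (ν π : ℕ) : Prop :=
  ∃ N, ∀ r ≥ N, negEig (Mmat c (r + 1)) = ν ∧ posEig (Mmat c (r + 1)) = π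


private lemma norm_mul_conj_lt_one {a b : ℂ} (ha : ‖a‖ < 1) (hb : ‖b‖ < 1) :
    ‖a * conj b‖ < 1 := by
  rw [norm_mul, RCLike.norm_conj]
  nlinarith [norm_nonneg a, norm_nonneg b]

private lemma one_sub_mul_conj_ne_zero {a b : ℂ} (ha : ‖a‖ < 1) (hb : ‖b‖ < 1) :
    1 - a * conj b ≠ 0 := by
  intro h
  rw [sub_eq_zero] at h
  have := norm_mul_conj_lt_one ha hb
  rw [← h] at this
  simp at this

private lemma szego_qf {m : ℕ} (z : Fin m → ℂ) (hz : ∀ i, ‖z i‖ < 1) (x : Fin m → ℂ) :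
    dotProduct (star x) ((Matrix.of fun i j => (1 - z i * conj (z j))⁻¹) *ᵥ x)
      = ((∑' n : ℕ, Complex.normSq (∑ j, x j * (conj (z j)) ^ n) : ℝ) : ℂ) := by
  have hsum : ∀ i j : Fin m, Summable (fun n : ℕ => (z i) ^ n * (conj (z j)) ^ n) := by
    intro i j
    have := summable_geometric_of_norm_lt_one (norm_mul_conj_lt_one (hz i) (hz j))
    simpa [mul_pow] using this
  have key : ∀ i j : Fin m, (1 - z i * conj (z j))⁻¹
      = ∑' n : ℕ, (z i) ^ n * (conj (z j)) ^ n := by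
    intro i j
    rw [← tsum_geometric_of_norm_lt_one (norm_mul_conj_lt_one (hz i) (hz j))]
    simp [mul_pow]
  have lhs1 : dotProduct (star x) ((Matrix.of fun i j => (1 - z i * conj (z j))⁻¹) *ᵥ x)
      = ∑ p : Fin m × Fin m, ∑' n : ℕ,
          (conj (x p.1) * (z p.1) ^ n) * (x p.2 * (conj (z p.2)) ^ n) := by
    simp only [dotProduct, Matrix.mulVec, Matrix.of_apply, Pi.star_apply,
      RCLike.star_def, Finset.mul_sum, key]
    rw [Fintype.sum_prod_type]
    apply Finset.sum_congr rfl
    intro i _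
    apply Finset.sum_congr rfl
    intro j _
    have : conj (x i) * ((∑' n : ℕ, (z i) ^ n * (conj (z j)) ^ n) * x j)
        = (conj (x i) * x j) * ∑' n : ℕ, (z i) ^ n * (conj (z j)) ^ n := by ring
    rw [this, ← tsum_mul_left]
    exact tsum_congr fun n => by ring
  rw [lhs1, ← Summable.tsum_finsetSum (fun p _ => ?_)]
  · rw [Complex.ofReal_tsum]
    apply tsum_congr
    intro n
    rw [Fintype.sum_prod_type]
    rw [← Fintype.sum_mul_sum (fun i => conj (x i) * (z i) ^ n) (fun j => x j * (conj (z j)) ^ n)]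
    have hc : (∑ i, conj (x i) * (z i) ^ n) = conj (∑ j, x j * (conj (z j)) ^ n) := by
      rw [map_sum]; congr 1; ext j; simp [map_mul]
    rw [hc, mul_comm, Complex.mul_conj]
  · have := (hsum p.1 p.2).mul_left (conj (x p.1) * x p.2)
    apply this.congr
    intro n; ring

private lemma card_neg_le_one {m : ℕ} (A : Matrix (Fin m) (Fin m) ℂ)
    (hA : A.IsHermitian) (v : Fin m → ℂ)
    (h : ∀ x : Fin m → ℂ, dotProduct (star v) x = 0 →
      0 ≤ (dotProduct (star x) (A *ᵥ x)).re) :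
    Nat.card {i // hA.eigenvalues i < 0} ≤ 1 := by
  by_contra hc
  push_neg at hc
  rw [Finite.one_lt_card_iff_nontrivial] at hc
  obtain ⟨⟨i, hi⟩, ⟨j, hj⟩, hij⟩ := hc
  have hij' : i ≠ j := fun h' => hij (by simpa using h')
  set u : Fin m → ℂ := ⇑(hA.eigenvectorBasis i) with hu
  set w : Fin m → ℂ := ⇑(hA.eigenvectorBasis j) with hw
  have hon := hA.eigenvectorBasis.orthonormal
  rw [orthonormal_iff_ite] at hon
  have hdot : ∀ p q : Fin m, dotProduct (star ⇑(hA.eigenvectorBasis p))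
      ⇑(hA.eigenvectorBasis q) = if p = q then 1 else 0 := by
    intro p q
    have := hon p q
    simpa [dotProduct, PiLp.inner_apply, RCLike.inner_apply, mul_comm] using this
  have huu : dotProduct (star u) u = 1 := by simpa using hdot i i
  have hww : dotProduct (star w) w = 1 := by simpa using hdot j j
  have huw : dotProduct (star u) w = 0 := by simpa [hij'] using hdot i j
  have hwu : dotProduct (star w) u = 0 := by simpa [hij'.symm] using hdot j i
  have hAu : A *ᵥ u = ((hA.eigenvalues i : ℂ)) • u := by
    rw [hu]
    rw [hA.mulVec_eigenvectorBasis i]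
    ext k; simp [Complex.real_smul]
  have hAw : A *ᵥ w = ((hA.eigenvalues j : ℂ)) • w := by
    rw [hw]
    rw [hA.mulVec_eigenvectorBasis j]
    ext k; simp [Complex.real_smul]
  set lam := hA.eigenvalues i
  set mu := hA.eigenvalues j
  by_cases ha : dotProduct (star v) u = 0
  · have h0 := h u ha
    rw [hAu, dotProduct_smul, huu, smul_eq_mul, mul_one] at h0
    simp only [Complex.ofReal_re] at h0
    exact absurd hi (not_lt.2 h0)
  · set a := dotProduct (star v) u
    set b := dotProduct (star v) w
    set x : Fin m → ℂ := b • u - a • w with hx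
    have hox : dotProduct (star v) x = 0 := by
      rw [hx, dotProduct_sub, dotProduct_smul, dotProduct_smul]
      simp only [smul_eq_mul]
      ring
    have h0 := h x hox
    have hsx : star x = conj b • star u - conj a • star w := by
      rw [hx]; ext k; simp [mul_comm]
    have hq : dotProduct (star x) (A *ᵥ x)
        = ((Complex.normSq b * lam + Complex.normSq a * mu : ℝ) : ℂ) := by
      rw [hx, Matrix.mulVec_sub, Matrix.mulVec_smul, Matrix.mulVec_smul, hAu, hAw, hsx]
      simp only [sub_dotProduct, dotProduct_sub, smul_dotProduct,
        dotProduct_smul, huu, hww, huw, hwu, smul_eq_mul]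
      push_cast
      rw [← Complex.mul_conj b, ← Complex.mul_conj a]
      ring
    rw [hq, Complex.ofReal_re] at h0
    have h1 : Complex.normSq b * lam ≤ 0 := mul_nonpos_of_nonneg_of_nonpos (Complex.normSq_nonneg b) hi.le
    have h2 : Complex.normSq a * mu < 0 :=
      mul_neg_of_pos_of_neg (Complex.normSq_pos.2 ha) hj
    linarith

/-- the two-point-value function `S` (equal to `1` at `w₀` and `0`
elsewhere on `Ω`) has a Schur kernel with exactly one negative square on `Ω`. -/
theorem schur_kernel_of_indicator_has_one_negative_square
    (Ω : Set ℂ) (hΩ : Ω ⊆ Metric.ball (0 : ℂ) 1)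
    (w₀ : ℂ) (hw₀ : w₀ ∈ Ω) (hne : ∃ z ∈ Ω, z ≠ w₀)
    (S : ℂ → ℂ) (hS1 : S w₀ = 1) (hS0 : ∀ z ∈ Ω, z ≠ w₀ → S z = 0) :
    HasNegSquares Ω (schurKer S) 1 := by
  have hnorm : ∀ z ∈ Ω, ‖z‖ < 1 := fun z hz => by
    simpa [mem_ball_zero_iff] using hΩ hz
  constructor
  · -- upper bound
    intro m z hz
    unfold negEig
    split
    case isFalse => exact Nat.zero_le 1
    case isTrue h =>
      have hn : ∀ i, ‖z i‖ < 1 := fun i => hnorm _ (hz i)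
      set v : Fin m → ℂ := fun i => S (z i) with hv
      set c : ℂ := (1 - w₀ * conj w₀)⁻¹ with hc
      apply card_neg_le_one _ h v
      intro x hx
      have hx' : ∑ j, conj (v j) * x j = 0 := by
        simpa [dotProduct] using hx
      have hmv : (Matrix.of fun i j => schurKer S (z j) (z i)) *ᵥ x
          = (Matrix.of fun i j => (1 - z i * conj (z j))⁻¹) *ᵥ x := by
        funext i
        have hent : ∀ j, schurKer S (z j) (z i)
            = (1 - z i * conj (z j))⁻¹ - c * (v i * conj (v j)) := by
          intro j
          by_cases hi : z i = w₀ <;> by_cases hj : z j = w₀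
          · simp [schurKer, hv, hi, hj, hS1, hc]
          · have : S (z j) = 0 := hS0 _ (hz j) hj
            simp [schurKer, hv, hi, hj, hS1, this, one_div]
          · have : S (z i) = 0 := hS0 _ (hz i) hi
            simp [schurKer, hv, hi, hj, hS1, this, one_div]
          · have h1 : S (z i) = 0 := hS0 _ (hz i) hi
            have h2 : S (z j) = 0 := hS0 _ (hz j) hj
            simp [schurKer, hv, h1, h2, one_div]
        simp only [Matrix.mulVec, dotProduct, Matrix.of_apply]
        calc ∑ j, schurKer S (z j) (z i) * x j
            = ∑ j, ((1 - z i * conj (z j))⁻¹ * x j - c * v i * (conj (v j) * x j)) := by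
              refine Finset.sum_congr rfl fun j _ => ?_
              rw [hent j]; ring
          _ = (∑ j, (1 - z i * conj (z j))⁻¹ * x j)
                - c * v i * ∑ j, conj (v j) * x j := by
              rw [Finset.sum_sub_distrib, Finset.mul_sum]
          _ = ∑ j, (1 - z i * conj (z j))⁻¹ * x j := by
              rw [hx', mul_zero, sub_zero]
      rw [hmv, szego_qf z hn x]
      simp only [Complex.ofReal_re]
      exact tsum_nonneg fun n => Complex.normSq_nonneg _
  · -- exactness
    obtain ⟨z₁, hz₁Ω, hz₁⟩ := hne
    refine ⟨2, ![w₀, z₁], ?_, ?_⟩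
    · intro i; fin_cases i <;> simpa
    · have hnw : ‖w₀‖ < 1 := hnorm _ hw₀
      have hnz : ‖z₁‖ < 1 := hnorm _ hz₁Ω
      set t : ℂ := (1 - w₀ * conj z₁)⁻¹ with htdef
      have ht : t ≠ 0 := inv_ne_zero (one_sub_mul_conj_ne_zero hnw hnz)
      have hSz₁ : S z₁ = 0 := hS0 _ hz₁Ω hz₁
      set A := Matrix.of fun i j => schurKer S (![w₀, z₁] j) (![w₀, z₁] i) with hA
      have eA00 : A 0 0 = 0 := by simp [hA, schurKer, hS1]
      have eA01 : A 0 1 = t := by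
        simp [hA, schurKer, hS1, hSz₁, one_div, htdef]
      have eA10 : A 1 0 = conj t := by
        simp only [hA, Matrix.of_apply, Matrix.cons_val_one, Matrix.head_cons,
          Matrix.cons_val_zero, schurKer, hS1, hSz₁, htdef]
        rw [map_inv₀, map_sub, map_one, map_mul, Complex.conj_conj]
        simp [mul_comm]
      have eA11 : A 1 1 = (((1 - Complex.normSq z₁)⁻¹ : ℝ) : ℂ) := by
        simp only [hA, Matrix.of_apply, Matrix.cons_val_one, Matrix.head_cons, schurKer, hSz₁,
          zero_mul, sub_zero]
        rw [Complex.mul_conj]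
        push_cast
        simp [hSz₁, Complex.mul_conj, one_div]
      have hherm : A.IsHermitian := by
        unfold Matrix.IsHermitian
        ext i j
        fin_cases i <;> fin_cases j <;>
          simp [Matrix.conjTranspose_apply, eA00, eA01, eA10, eA11, Complex.conj_ofReal]
      unfold negEig
      rw [dif_pos hherm]
      have hdet : A.det = ((-(Complex.normSq t) : ℝ) : ℂ) := by
        rw [Matrix.det_fin_two, eA00, eA01, eA10, eA11]
        rw [Complex.mul_conj]
        push_cast
        ring
      have hprod := hherm.det_eq_prod_eigenvalues
      rw [Fin.prod_univ_two, hdet] at hprod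
      have hmul : hherm.eigenvalues 0 * hherm.eigenvalues 1 = -(Complex.normSq t) := by
        have h' := hprod.symm
        push_cast at h'
        exact Complex.ofReal_injective (by push_cast; exact h')
      have hneg : hherm.eigenvalues 0 * hherm.eigenvalues 1 < 0 := by
        rw [hmul]
        simpa using Complex.normSq_pos.2 ht
      have hfin2 : ∀ i : Fin 2, i = 0 ∨ i = 1 := by decide
      rw [Nat.card_eq_one_iff_exists]
      rcases mul_neg_iff.1 hneg with ⟨h0, h1⟩ | ⟨h0, h1⟩
      · refine ⟨⟨1, h1⟩, ?_⟩
        rintro ⟨i, hi⟩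
        rcases hfin2 i with rfl | rfl
        · exact absurd hi (asymm h0)
        · rfl
      · refine ⟨⟨0, h0⟩, ?_⟩
        rintro ⟨i, hi⟩
        rcases hfin2 i with rfl | rfl
        · rfl
        · exact absurd hi (asymm h1)
end

section
/- Let a₀, a₁, a₂, … be complex numbers and define c₀ = 1 and c_k = Σ_{j=0}^{k−1} c_j a_{k−1−j} for k ≥ 1. Then for every r ≥ 1: M_r = B_r · diag(1, I_r − T_r T_r*) · B_r* and M_r = B_r* · diag(I_r − T_r* T_r, 1) · B_r, where diag(1, A) denotes the (r+1)×(r+1) block-diagonal matrix with scalar entry 1 in the top-left corner and the r×r block A in the bottom-right, and diag(A, 1) the one with A in the top-left and 1 in the bottom-right corner. -/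
open scoped Matrix ComplexConjugate

/-- Strictly lower triangular Toeplitz matrix `L` with `L i j = a (i-j-1)` for `j < i`. -/
def Lmat (a : ℕ → ℂ) (m : ℕ) : Matrix (Fin m) (Fin m) ℂ :=
  Matrix.of fun i j => if (j : ℕ) < i then a ((i : ℕ) - j - 1) else 0

lemma sum_interval_shift (f : ℕ → ℂ) (m i j : ℕ) (hi : i < m) :
    ∑ k ∈ Finset.range m, (if j < k ∧ k ≤ i then f k else 0)
      = ∑ t ∈ Finset.range (i - j), f (j + 1 + t) := by
  have h1 : ∀ k, (if j < k ∧ k ≤ i then f k else 0)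
      = if k ∈ Finset.Ico (j+1) (i+1) then f k else 0 := by
    intro k
    simp only [Finset.mem_Ico]
    exact if_congr (by omega) rfl rfl
  simp only [h1]
  have hsub : Finset.Ico (j+1) (i+1) ⊆ Finset.range m := by
    intro k hk
    simp only [Finset.mem_Ico] at hk
    simp only [Finset.mem_range]; omega
  rw [Finset.sum_ite_mem, Finset.inter_eq_right.mpr hsub, Finset.sum_Ico_eq_sum_range,
    show i + 1 - (j+1) = i - j from by omega]

lemma Bmat_mul_Lmat (a c : ℕ → ℂ)
    (hc : ∀ k : ℕ, c (k + 1) = ∑ j ∈ Finset.range (k + 1), c j * a (k - j))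
    (m : ℕ) (i j : Fin m) :
    (Bmat c m * Lmat a m) i j = if (j : ℕ) < i then c ((i : ℕ) - j) else 0 := by
  rw [Matrix.mul_apply]
  have h1 : ∀ k : Fin m, Bmat c m i k * Lmat a m k j
      = (fun k : ℕ => if (j : ℕ) < k ∧ k ≤ (i : ℕ) then
          c ((i : ℕ) - k) * a (k - (j : ℕ) - 1) else 0) (k : ℕ) := by
    intro k
    simp only [Bmat, Lmat, Matrix.of_apply]
    by_cases h1 : (k : ℕ) ≤ i <;> by_cases h2 : (j : ℕ) < k <;>
      simp [h1, h2]
  rw [Finset.sum_congr rfl fun k _ => h1 k,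
    Fin.sum_univ_eq_sum_range (fun k : ℕ => if (j : ℕ) < k ∧ k ≤ (i : ℕ) then
      c ((i : ℕ) - k) * a (k - (j : ℕ) - 1) else 0) m,
    sum_interval_shift _ m i j i.isLt]
  by_cases hij : (j : ℕ) < i
  · rw [if_pos hij]
    have hd : (i : ℕ) - j = ((i : ℕ) - j - 1) + 1 := by omega
    set d := (i : ℕ) - j - 1 with hdd
    rw [hd, hc d]
    have h2 : ∀ t ∈ Finset.range (d + 1),
        c ((i : ℕ) - ((j : ℕ) + 1 + t)) * a ((j : ℕ) + 1 + t - (j : ℕ) - 1)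
          = (fun t => c (d - t) * a (d - (d - t))) t := by
      intro t ht
      simp only [Finset.mem_range] at ht
      rw [show (i : ℕ) - ((j : ℕ) + 1 + t) = d - t from by omega,
        show (j : ℕ) + 1 + t - (j : ℕ) - 1 = d - (d - t) from by omega]
    rw [Finset.sum_congr rfl h2,
      ← Finset.sum_range_reflect (fun t => c t * a (d - t)) (d + 1)]
    refine Finset.sum_congr rfl fun t ht => ?_
    simp only [Finset.mem_range] at ht
    rw [show d + 1 - 1 - t = d - t from by omega]
  · rw [if_neg hij, show (i : ℕ) - (j : ℕ) = 0 from by omega]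
    simp

lemma Bmat_mul_one_sub_Lmat (a c : ℕ → ℂ) (hc0 : c 0 = 1)
    (hc : ∀ k : ℕ, c (k + 1) = ∑ j ∈ Finset.range (k + 1), c j * a (k - j))
    (m : ℕ) :
    Bmat c m * (1 - Lmat a m) = 1 := by
  ext i j
  rw [Matrix.mul_sub, Matrix.mul_one, Matrix.sub_apply, Bmat_mul_Lmat a c hc m i j]
  simp only [Bmat, Matrix.of_apply, Matrix.one_apply]
  by_cases h : i = j
  · subst h; simp [hc0]
  · have h' : (i : ℕ) ≠ j := fun hh => h (Fin.ext hh)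
    by_cases h2 : (j : ℕ) ≤ i
    · rw [if_pos h2, if_pos (by omega), if_neg h]; ring
    · rw [if_neg h2, if_neg (by omega), if_neg h]; ring

lemma Mmat_eq_add (c : ℕ → ℂ) (hc0 : c 0 = 1) (m : ℕ) :
    Mmat c m = Bmat c m + (Bmat c m)ᴴ - 1 := by
  ext i j
  simp only [Mmat, Bmat, Matrix.sub_apply, Matrix.add_apply, Matrix.conjTranspose_apply,
    Matrix.of_apply, Matrix.one_apply]
  by_cases h : i = j
  · subst h
    simp [hc0]
  · have h' : (i : ℕ) ≠ j := fun hh => h (Fin.ext hh)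
    by_cases h2 : (j : ℕ) ≤ i
    · rw [if_pos h2, if_pos h2, if_neg (by omega), if_neg h]
      simp
    · rw [if_neg h2, if_neg h2, if_pos (by omega), if_neg h]
      simp

lemma dblock_left_eq (a : ℕ → ℂ) (r : ℕ) (h : r + 1 = 1 + r) :
    dblock h (1 : Matrix (Fin 1) (Fin 1) ℂ) (1 - Tmat a r * (Tmat a r)ᴴ)
      = 1 - Lmat a (r+1) * (Lmat a (r+1))ᴴ := by
  ext i j
  simp only [dblock, Matrix.submatrix_apply, splitAt]
  have hterm : ∀ k : Fin (r+1), Lmat a (r+1) i k * (Lmat a (r+1))ᴴ k j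
      = (fun k : ℕ => if k < (i : ℕ) ∧ k < (j : ℕ) then
          a ((i : ℕ) - k - 1) * conj (a ((j : ℕ) - k - 1)) else 0) (k : ℕ) := by
    intro k
    simp only [Lmat, Matrix.conjTranspose_apply, Matrix.of_apply]
    by_cases h1 : (k : ℕ) < i <;> by_cases h2 : (k : ℕ) < j <;> simp [h1, h2]
  have hL : (Lmat a (r+1) * (Lmat a (r+1))ᴴ) i j
      = ∑ k ∈ Finset.range (r+1), if k < (i : ℕ) ∧ k < (j : ℕ) then
          a ((i : ℕ) - k - 1) * conj (a ((j : ℕ) - k - 1)) else 0 := by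
    rw [Matrix.mul_apply, Finset.sum_congr rfl fun k _ => hterm k,
      Fin.sum_univ_eq_sum_range (fun k : ℕ => if k < (i : ℕ) ∧ k < (j : ℕ) then
          a ((i : ℕ) - k - 1) * conj (a ((j : ℕ) - k - 1)) else 0) (r+1)]
  by_cases hi : (i : ℕ) < 1 <;> by_cases hj : (j : ℕ) < 1
  · rw [dif_pos hi, dif_pos hj]
    have : i = j := Fin.ext (by omega)
    subst this
    simp only [Matrix.fromBlocks_apply₁₁, Matrix.sub_apply, Matrix.one_apply_eq, hL]
    rw [Finset.sum_eq_zero fun k hk => if_neg (show ¬(k < (i:ℕ) ∧ k < (i:ℕ)) from by omega)]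
    simp
  · rw [dif_pos hi, dif_neg hj]
    have hij : i ≠ j := fun hh => by rw [hh] at hi; omega
    simp only [Matrix.fromBlocks_apply₁₂, Matrix.zero_apply, Matrix.sub_apply,
      Matrix.one_apply_ne hij, hL]
    rw [Finset.sum_eq_zero fun k hk => if_neg (show ¬(k < (i:ℕ) ∧ k < (j:ℕ)) from by omega)]
    simp
  · rw [dif_neg hi, dif_pos hj]
    have hij : i ≠ j := fun hh => by rw [hh] at hi; omega
    simp only [Matrix.fromBlocks_apply₂₁, Matrix.zero_apply, Matrix.sub_apply,
      Matrix.one_apply_ne hij, hL]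
    rw [Finset.sum_eq_zero fun k hk => if_neg (show ¬(k < (i:ℕ) ∧ k < (j:ℕ)) from by omega)]
    simp
  · rw [dif_neg hi, dif_neg hj]
    simp only [Matrix.fromBlocks_apply₂₂, Matrix.sub_apply, hL]
    have hone : (1 : Matrix (Fin r) (Fin r) ℂ) ⟨(i:ℕ)-1, by omega⟩ ⟨(j:ℕ)-1, by omega⟩
        = (1 : Matrix (Fin (r+1)) (Fin (r+1)) ℂ) i j := by
      simp only [Matrix.one_apply]
      by_cases h : i = j
      · subst h; rw [if_pos rfl, if_pos rfl]
      · rw [if_neg h, if_neg (fun hh => h (Fin.ext (by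
          have := congrArg Fin.val hh
          simp only at this
          omega)))]
    rw [hone]
    congr 1
    have hterm2 : ∀ s : Fin r, Tmat a r ⟨(i:ℕ)-1, by omega⟩ s * (Tmat a r)ᴴ s ⟨(j:ℕ)-1, by omega⟩
        = (fun s : ℕ => if s ≤ (i : ℕ) - 1 ∧ s ≤ (j : ℕ) - 1 then
            a ((i : ℕ) - 1 - s) * conj (a ((j : ℕ) - 1 - s)) else 0) (s : ℕ) := by
      intro s
      simp only [Tmat, Matrix.conjTranspose_apply, Matrix.of_apply]
      by_cases h1 : (s : ℕ) ≤ (i:ℕ) - 1 <;> by_cases h2 : (s : ℕ) ≤ (j:ℕ) - 1 <;>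
        simp [h1, h2]
    rw [Matrix.mul_apply, Finset.sum_congr rfl fun s _ => hterm2 s,
      Fin.sum_univ_eq_sum_range (fun s : ℕ => if s ≤ (i : ℕ) - 1 ∧ s ≤ (j : ℕ) - 1 then
            a ((i : ℕ) - 1 - s) * conj (a ((j : ℕ) - 1 - s)) else 0) r,
      Finset.sum_range_succ (fun k : ℕ => if k < (i : ℕ) ∧ k < (j : ℕ) then
          a ((i : ℕ) - k - 1) * conj (a ((j : ℕ) - k - 1)) else 0) r]
    rw [if_neg (show ¬((r:ℕ) < (i:ℕ) ∧ (r:ℕ) < (j:ℕ)) from by omega), add_zero]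
    refine Finset.sum_congr rfl fun k hk => ?_
    simp only [Finset.mem_range] at hk
    rw [show (i : ℕ) - k - 1 = (i:ℕ) - 1 - k from by omega,
      show (j : ℕ) - k - 1 = (j:ℕ) - 1 - k from by omega]
    exact if_congr (by omega) rfl rfl

lemma dblock_right_eq (a : ℕ → ℂ) (r : ℕ) (h : r + 1 = r + 1) :
    dblock h (1 - (Tmat a r)ᴴ * Tmat a r) (1 : Matrix (Fin 1) (Fin 1) ℂ)
      = 1 - (Lmat a (r+1))ᴴ * Lmat a (r+1) := by
  ext i j
  simp only [dblock, Matrix.submatrix_apply, splitAt]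
  have hterm : ∀ k : Fin (r+1), (Lmat a (r+1))ᴴ i k * Lmat a (r+1) k j
      = (fun k : ℕ => if (i : ℕ) < k ∧ (j : ℕ) < k then
          conj (a (k - (i : ℕ) - 1)) * a (k - (j : ℕ) - 1) else 0) (k : ℕ) := by
    intro k
    simp only [Lmat, Matrix.conjTranspose_apply, Matrix.of_apply]
    by_cases h1 : (i : ℕ) < k <;> by_cases h2 : (j : ℕ) < k <;> simp [h1, h2]
  have hL : ((Lmat a (r+1))ᴴ * Lmat a (r+1)) i j
      = ∑ k ∈ Finset.range (r+1), if (i : ℕ) < k ∧ (j : ℕ) < k then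
          conj (a (k - (i : ℕ) - 1)) * a (k - (j : ℕ) - 1) else 0 := by
    rw [Matrix.mul_apply, Finset.sum_congr rfl fun k _ => hterm k,
      Fin.sum_univ_eq_sum_range (fun k : ℕ => if (i : ℕ) < k ∧ (j : ℕ) < k then
          conj (a (k - (i : ℕ) - 1)) * a (k - (j : ℕ) - 1) else 0) (r+1)]
  by_cases hi : (i : ℕ) < r <;> by_cases hj : (j : ℕ) < r
  · rw [dif_pos hi, dif_pos hj]
    simp only [Matrix.fromBlocks_apply₁₁, Matrix.sub_apply, hL]
    have hone : (1 : Matrix (Fin r) (Fin r) ℂ) ⟨(i:ℕ), hi⟩ ⟨(j:ℕ), hj⟩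
        = (1 : Matrix (Fin (r+1)) (Fin (r+1)) ℂ) i j := by
      simp only [Matrix.one_apply]
      by_cases h : i = j
      · subst h; rw [if_pos rfl, if_pos rfl]
      · rw [if_neg h, if_neg (fun hh => h (Fin.ext (by
          have := congrArg Fin.val hh
          simp only at this
          omega)))]
    rw [hone]
    congr 1
    have hterm2 : ∀ s : Fin r, (Tmat a r)ᴴ ⟨(i:ℕ), hi⟩ s * Tmat a r s ⟨(j:ℕ), hj⟩
        = (fun s : ℕ => if (i : ℕ) ≤ s ∧ (j : ℕ) ≤ s then
            conj (a (s - (i : ℕ))) * a (s - (j : ℕ)) else 0) (s : ℕ) := by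
      intro s
      simp only [Tmat, Matrix.conjTranspose_apply, Matrix.of_apply]
      by_cases h1 : (i : ℕ) ≤ s <;> by_cases h2 : (j : ℕ) ≤ s <;> simp [h1, h2]
    rw [Matrix.mul_apply, Finset.sum_congr rfl fun s _ => hterm2 s,
      Fin.sum_univ_eq_sum_range (fun s : ℕ => if (i : ℕ) ≤ s ∧ (j : ℕ) ≤ s then
            conj (a (s - (i : ℕ))) * a (s - (j : ℕ)) else 0) r,
      Finset.sum_range_succ' (fun k : ℕ => if (i : ℕ) < k ∧ (j : ℕ) < k then
          conj (a (k - (i : ℕ) - 1)) * a (k - (j : ℕ) - 1) else 0) r]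
    rw [if_neg (show ¬((i:ℕ) < 0 ∧ (j:ℕ) < 0) from by omega), add_zero]
    refine Finset.sum_congr rfl fun k hk => ?_
    rw [show k + 1 - (i : ℕ) - 1 = k - (i:ℕ) from by omega,
      show k + 1 - (j : ℕ) - 1 = k - (j:ℕ) from by omega]
    exact if_congr (by omega) rfl rfl
  · rw [dif_pos hi, dif_neg hj]
    have hij : i ≠ j := fun hh => by rw [hh] at hi; omega
    simp only [Matrix.fromBlocks_apply₁₂, Matrix.zero_apply, Matrix.sub_apply,
      Matrix.one_apply_ne hij, hL]
    rw [Finset.sum_eq_zero fun k hk => if_neg (show ¬((i:ℕ) < k ∧ (j:ℕ) < k) from by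
      simp only [Finset.mem_range] at hk; omega)]
    simp
  · rw [dif_neg hi, dif_pos hj]
    have hij : i ≠ j := fun hh => by rw [hh] at hi; omega
    simp only [Matrix.fromBlocks_apply₂₁, Matrix.zero_apply, Matrix.sub_apply,
      Matrix.one_apply_ne hij, hL]
    rw [Finset.sum_eq_zero fun k hk => if_neg (show ¬((i:ℕ) < k ∧ (j:ℕ) < k) from by
      simp only [Finset.mem_range] at hk; omega)]
    simp
  · rw [dif_neg hi, dif_neg hj]
    have : i = j := Fin.ext (by omega)
    subst this
    simp only [Matrix.fromBlocks_apply₂₂, Matrix.sub_apply, Matrix.one_apply_eq, hL]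
    rw [Finset.sum_eq_zero fun k hk => if_neg (show ¬((i:ℕ) < k ∧ (i:ℕ) < k) from by
      simp only [Finset.mem_range] at hk; omega)]
    simp [Matrix.one_apply]

/-- `M_r = B_r diag(1, I_r - T_r T_r*) B_r*`
and `M_r = B_r* diag(I_r - T_r* T_r, 1) B_r`. -/
theorem Mmat_eq_Bmat_dblock_mul
    (a c : ℕ → ℂ) (hc0 : c 0 = 1)
    (hc : ∀ k : ℕ, c (k + 1) = ∑ j ∈ Finset.range (k + 1), c j * a (k - j))
    (r : ℕ) (hr : 1 ≤ r) :
    Mmat c (r + 1) =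
        Bmat c (r + 1) *
          dblock (by omega) (1 : Matrix (Fin 1) (Fin 1) ℂ)
            (1 - Tmat a r * (Tmat a r)ᴴ) *
          (Bmat c (r + 1))ᴴ ∧
      Mmat c (r + 1) =
        (Bmat c (r + 1))ᴴ *
          dblock (by omega) (1 - (Tmat a r)ᴴ * Tmat a r)
            (1 : Matrix (Fin 1) (Fin 1) ℂ) *
          Bmat c (r + 1) := by
  have hB : Bmat c (r+1) * (1 - Lmat a (r+1)) = 1 :=
    Bmat_mul_one_sub_Lmat a c hc0 hc (r+1)
  have hB' : (1 - Lmat a (r+1)) * Bmat c (r+1) = 1 := mul_eq_one_comm.mp hB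
  have hBL : Bmat c (r+1) * Lmat a (r+1) = Bmat c (r+1) - 1 := by
    rw [← hB]; noncomm_ring
  have hLB : Lmat a (r+1) * Bmat c (r+1) = Bmat c (r+1) - 1 := by
    rw [← hB']; noncomm_ring
  have hLhBh : (Lmat a (r+1))ᴴ * (Bmat c (r+1))ᴴ = (Bmat c (r+1))ᴴ - 1 := by
    rw [← Matrix.conjTranspose_mul, hBL, Matrix.conjTranspose_sub, Matrix.conjTranspose_one]
  have hBhLh : (Bmat c (r+1))ᴴ * (Lmat a (r+1))ᴴ = (Bmat c (r+1))ᴴ - 1 := by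
    rw [← Matrix.conjTranspose_mul, hLB, Matrix.conjTranspose_sub, Matrix.conjTranspose_one]
  have hM : Mmat c (r+1) = Bmat c (r+1) + (Bmat c (r+1))ᴴ - 1 := Mmat_eq_add c hc0 (r+1)
  constructor
  · rw [dblock_left_eq a r, hM]
    have he : Bmat c (r+1) * (1 - Lmat a (r+1) * (Lmat a (r+1))ᴴ) * (Bmat c (r+1))ᴴ
        = Bmat c (r+1) * (Bmat c (r+1))ᴴ
          - (Bmat c (r+1) * Lmat a (r+1)) * ((Lmat a (r+1))ᴴ * (Bmat c (r+1))ᴴ) := by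
      noncomm_ring
    rw [he, hBL, hLhBh]
    noncomm_ring
  · rw [dblock_right_eq a r, hM]
    have he : (Bmat c (r+1))ᴴ * (1 - (Lmat a (r+1))ᴴ * Lmat a (r+1)) * Bmat c (r+1)
        = (Bmat c (r+1))ᴴ * Bmat c (r+1)
          - ((Bmat c (r+1))ᴴ * (Lmat a (r+1))ᴴ) * (Lmat a (r+1) * Bmat c (r+1)) := by
      noncomm_ring
    rw [he, hBhLh, hLB]
    noncomm_ring
end

section
/- Let a₀, a₁, a₂, … be complex numbers. For r ≥ 1 let G_r be the 2r×2r Hermitian block matrix [[I_r − T_r T_r*, Q_r], [Q_r*, I_r − T̃_r T̃_r*]]. Then each of the four quantities ν(I_r − T_r T_r*), π(I_r − T_r T_r*), ν(G_r), and π(G_r) is a nondecreasing function of r; that is, for all 1 ≤ r ≤ s: ν(I_r − T_r T_r*) ≤ ν(I_s − T_s T_s*), π(I_r − T_r T_r*) ≤ π(I_s − T_s T_s*), ν(G_r) ≤ ν(G_s), and π(G_r) ≤ π(G_s). -/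
open scoped Matrix ComplexConjugate

/-- The `2r×2r` Hermitian block matrix
`G_r = [[I_r − T_r T_r*, Q_r], [Q_r*, I_r − T̃_r T̃_r*]]`. -/
noncomputable def Gblk (a : ℕ → ℂ) (r : ℕ) :
    Matrix (Fin r ⊕ Fin r) (Fin r ⊕ Fin r) ℂ :=
  Matrix.fromBlocks (1 - Tmat a r * (Tmat a r)ᴴ) (Qmat a r)
    ((Qmat a r)ᴴ) (1 - Ttil a r * (Ttil a r)ᴴ)

namespace InertiaAux

open Matrix Complex

variable {n m : Type*} [Fintype n] [DecidableEq n] [Fintype m] [DecidableEq m]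

lemma qform_eq {A : Matrix n n ℂ} (hA : A.IsHermitian) (x : n → ℂ) :
    (star x ⬝ᵥ A *ᵥ x).re
      = ∑ i, hA.eigenvalues i *
          Complex.normSq ((star (hA.eigenvectorUnitary : Matrix n n ℂ) *ᵥ x) i) := by
  set U := (hA.eigenvectorUnitary : Matrix n n ℂ) with hUdef
  set y := star U *ᵥ x with hy
  have key : star x ⬝ᵥ A *ᵥ x
      = star y ⬝ᵥ (Matrix.diagonal (Complex.ofReal ∘ hA.eigenvalues)) *ᵥ y := by
    conv_lhs => rw [hA.spectral_theorem, Unitary.conjStarAlgAut_apply]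
    rw [← Matrix.mulVec_mulVec, ← Matrix.mulVec_mulVec, Matrix.dotProduct_mulVec]
    congr 1
    rw [hy, Matrix.star_mulVec, Matrix.star_eq_conjTranspose,
      Matrix.conjTranspose_conjTranspose]
  rw [key, dotProduct]
  rw [Complex.re_sum]
  refine Finset.sum_congr rfl fun i _ => ?_
  rw [Matrix.mulVec_diagonal]
  have h2 : star (y i) * ((Complex.ofReal ∘ hA.eigenvalues) i * y i)
      = (hA.eigenvalues i : ℂ) * (y i * (starRingEnd ℂ) (y i)) := by
    simp only [Function.comp_apply, RCLike.star_def]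
    ring
  rw [Pi.star_apply, h2, Complex.mul_conj, ← Complex.ofReal_mul, Complex.ofReal_re]

lemma finrank_le_card_neg {A : Matrix n n ℂ} (hA : A.IsHermitian)
    (W : Submodule ℂ (n → ℂ))
    (hW : ∀ x ∈ W, x ≠ 0 → (star x ⬝ᵥ A *ᵥ x).re < 0) :
    Module.finrank ℂ W ≤ Fintype.card {i // hA.eigenvalues i < 0} := by
  set U := (hA.eigenvectorUnitary : Matrix n n ℂ) with hUdef
  let φ : (n → ℂ) →ₗ[ℂ] ({i // hA.eigenvalues i < 0} → ℂ) :=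
    { toFun := fun x i => (star U *ᵥ x) i.1
      map_add' := by intro x y; funext i; simp [Matrix.mulVec_add]
      map_smul' := by intro c x; funext i; simp [Matrix.mulVec_smul] }
  have hinj : Function.Injective (φ.comp W.subtype) := by
    rw [← LinearMap.ker_eq_bot, LinearMap.ker_eq_bot']
    intro x h0
    by_contra hne
    have hxne : (x : n → ℂ) ≠ 0 := fun h => hne (Subtype.ext h)
    have hq := hW x x.2 hxne
    rw [qform_eq hA] at hq
    have hge : (0:ℝ) ≤ ∑ i, hA.eigenvalues i * Complex.normSq ((star U *ᵥ (x : n → ℂ)) i) := by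
      apply Finset.sum_nonneg
      intro i _
      by_cases hi : hA.eigenvalues i < 0
      · have : (star U *ᵥ (x : n → ℂ)) i = 0 := congrFun h0 ⟨i, hi⟩
        simp [this]
      · exact mul_nonneg (le_of_not_gt hi) (Complex.normSq_nonneg _)
    exact absurd hq (not_lt.mpr hge)
  calc Module.finrank ℂ W ≤ Module.finrank ℂ ({i // hA.eigenvalues i < 0} → ℂ) :=
        LinearMap.finrank_le_finrank_of_injective hinj
    _ = Fintype.card {i // hA.eigenvalues i < 0} := Module.finrank_fintype_fun_eq_card ℂ

lemma exists_negdef {A : Matrix n n ℂ} (hA : A.IsHermitian) :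
    ∃ W : Submodule ℂ (n → ℂ),
      (∀ x ∈ W, x ≠ 0 → (star x ⬝ᵥ A *ᵥ x).re < 0) ∧
      Module.finrank ℂ W = Fintype.card {i // hA.eigenvalues i < 0} := by
  set U := (hA.eigenvectorUnitary : Matrix n n ℂ) with hUdef
  let ext : ({i // hA.eigenvalues i < 0} → ℂ) →ₗ[ℂ] (n → ℂ) :=
    { toFun := fun c j => if h : hA.eigenvalues j < 0 then c ⟨j, h⟩ else 0
      map_add' := by intro x y; funext j; by_cases h : hA.eigenvalues j < 0 <;> simp [h]
      map_smul' := by intro c x; funext j; by_cases h : hA.eigenvalues j < 0 <;> simp [h] }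
  let ψ := (Matrix.mulVecLin U).comp ext
  have hU1 : star U * U = 1 := by
    exact Unitary.coe_star_mul_self hA.eigenvectorUnitary
  have hstar : ∀ c, star U *ᵥ (ψ c) = ext c := by
    intro c
    show star U *ᵥ (U *ᵥ ext c) = ext c
    rw [Matrix.mulVec_mulVec, hU1, Matrix.one_mulVec]
  have hψinj : Function.Injective ψ := by
    intro c d h
    have h2 : ext c = ext d := by rw [← hstar c, ← hstar d, h]
    funext i
    have := congrFun h2 i.1
    simpa [ext, i.2] using this
  refine ⟨LinearMap.range ψ, ?_, ?_⟩
  · rintro x ⟨c, rfl⟩ hne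
    have hc : c ≠ 0 := by rintro rfl; simp at hne
    rw [qform_eq hA]
    obtain ⟨i0, hi0⟩ := Function.ne_iff.mp hc
    have hlt : ∑ i, hA.eigenvalues i * Complex.normSq ((star U *ᵥ ψ c) i)
        < ∑ _i : n, (0:ℝ) := by
      apply Finset.sum_lt_sum
      · intro i _
        rw [hstar c]
        by_cases h : hA.eigenvalues i < 0
        · exact mul_nonpos_of_nonpos_of_nonneg h.le (Complex.normSq_nonneg _)
        · have : ext c i = 0 := dif_neg h
          simp [this]
      · refine ⟨i0.1, Finset.mem_univ _, ?_⟩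
        rw [hstar c]
        have hext : ext c i0.1 = c i0 := by
          rw [show (ext c) i0.1 = if h : hA.eigenvalues i0.1 < 0 then c ⟨i0.1, h⟩ else 0 from rfl,
            dif_pos i0.2]
        rw [hext]
        exact mul_neg_of_neg_of_pos i0.2 (Complex.normSq_pos.mpr hi0)
    simpa using hlt
  · rw [LinearMap.finrank_range_of_inj hψinj, Module.finrank_fintype_fun_eq_card]

lemma finrank_le_card_pos {A : Matrix n n ℂ} (hA : A.IsHermitian)
    (W : Submodule ℂ (n → ℂ))
    (hW : ∀ x ∈ W, x ≠ 0 → 0 < (star x ⬝ᵥ A *ᵥ x).re) :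
    Module.finrank ℂ W ≤ Fintype.card {i // 0 < hA.eigenvalues i} := by
  set U := (hA.eigenvectorUnitary : Matrix n n ℂ) with hUdef
  let φ : (n → ℂ) →ₗ[ℂ] ({i // 0 < hA.eigenvalues i} → ℂ) :=
    { toFun := fun x i => (star U *ᵥ x) i.1
      map_add' := by intro x y; funext i; simp [Matrix.mulVec_add]
      map_smul' := by intro c x; funext i; simp [Matrix.mulVec_smul] }
  have hinj : Function.Injective (φ.comp W.subtype) := by
    rw [← LinearMap.ker_eq_bot, LinearMap.ker_eq_bot']
    intro x h0
    by_contra hne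
    have hxne : (x : n → ℂ) ≠ 0 := fun h => hne (Subtype.ext h)
    have hq := hW x x.2 hxne
    rw [qform_eq hA] at hq
    have hge : ∑ i, hA.eigenvalues i * Complex.normSq ((star U *ᵥ (x : n → ℂ)) i) ≤ 0 := by
      apply Finset.sum_nonpos
      intro i _
      by_cases hi : 0 < hA.eigenvalues i
      · have : (star U *ᵥ (x : n → ℂ)) i = 0 := congrFun h0 ⟨i, hi⟩
        simp [this]
      · exact mul_nonpos_of_nonpos_of_nonneg (le_of_not_gt hi) (Complex.normSq_nonneg _)
    exact absurd hq (not_lt.mpr hge)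
  calc Module.finrank ℂ W ≤ Module.finrank ℂ ({i // 0 < hA.eigenvalues i} → ℂ) :=
        LinearMap.finrank_le_finrank_of_injective hinj
    _ = Fintype.card {i // 0 < hA.eigenvalues i} := Module.finrank_fintype_fun_eq_card ℂ

lemma exists_posdef {A : Matrix n n ℂ} (hA : A.IsHermitian) :
    ∃ W : Submodule ℂ (n → ℂ),
      (∀ x ∈ W, x ≠ 0 → 0 < (star x ⬝ᵥ A *ᵥ x).re) ∧
      Module.finrank ℂ W = Fintype.card {i // 0 < hA.eigenvalues i} := by
  set U := (hA.eigenvectorUnitary : Matrix n n ℂ) with hUdef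
  let ext : ({i // 0 < hA.eigenvalues i} → ℂ) →ₗ[ℂ] (n → ℂ) :=
    { toFun := fun c j => if h : 0 < hA.eigenvalues j then c ⟨j, h⟩ else 0
      map_add' := by intro x y; funext j; by_cases h : 0 < hA.eigenvalues j <;> simp [h]
      map_smul' := by intro c x; funext j; by_cases h : 0 < hA.eigenvalues j <;> simp [h] }
  let ψ := (Matrix.mulVecLin U).comp ext
  have hU1 : star U * U = 1 := by
    exact Unitary.coe_star_mul_self hA.eigenvectorUnitary
  have hstar : ∀ c, star U *ᵥ (ψ c) = ext c := by
    intro c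
    show star U *ᵥ (U *ᵥ ext c) = ext c
    rw [Matrix.mulVec_mulVec, hU1, Matrix.one_mulVec]
  have hψinj : Function.Injective ψ := by
    intro c d h
    have h2 : ext c = ext d := by rw [← hstar c, ← hstar d, h]
    funext i
    have := congrFun h2 i.1
    simpa [ext, i.2] using this
  refine ⟨LinearMap.range ψ, ?_, ?_⟩
  · rintro x ⟨c, rfl⟩ hne
    have hc : c ≠ 0 := by rintro rfl; simp at hne
    rw [qform_eq hA]
    obtain ⟨i0, hi0⟩ := Function.ne_iff.mp hc
    have hlt : ∑ _i : n, (0:ℝ)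
        < ∑ i, hA.eigenvalues i * Complex.normSq ((star U *ᵥ ψ c) i) := by
      apply Finset.sum_lt_sum
      · intro i _
        rw [hstar c]
        by_cases h : 0 < hA.eigenvalues i
        · exact mul_nonneg h.le (Complex.normSq_nonneg _)
        · have : ext c i = 0 := dif_neg h
          simp [this]
      · refine ⟨i0.1, Finset.mem_univ _, ?_⟩
        rw [hstar c]
        have hext : ext c i0.1 = c i0 := by
          rw [show (ext c) i0.1 = if h : 0 < hA.eigenvalues i0.1 then c ⟨i0.1, h⟩ else 0 from rfl,
            dif_pos i0.2]
        rw [hext]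
        exact mul_pos i0.2 (Complex.normSq_pos.mpr hi0)
    simpa using hlt
  · rw [LinearMap.finrank_range_of_inj hψinj, Module.finrank_fintype_fun_eq_card]

/-- Extension by zero along an injective map, as a linear map. -/
noncomputable def Emap (f : m → n) : (m → ℂ) →ₗ[ℂ] (n → ℂ) :=
  { toFun := fun x j => ∑ i, if f i = j then x i else 0
    map_add' := by
      intro x y; funext j
      show (∑ i, if f i = j then (x + y) i else 0)
          = (∑ i, if f i = j then x i else 0) + (∑ i, if f i = j then y i else 0)
      rw [← Finset.sum_add_distrib]
      exact Finset.sum_congr rfl fun i _ => by split <;> simp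
    map_smul' := by
      intro c x; funext j
      show (∑ i, if f i = j then (c • x) i else 0) = c • (∑ i, if f i = j then x i else 0)
      rw [smul_eq_mul, Finset.mul_sum]
      exact Finset.sum_congr rfl fun i _ => by split <;> simp }

lemma Emap_apply_f {f : m → n} (hf : Function.Injective f) (x : m → ℂ) (i : m) :
    Emap f x (f i) = x i := by
  show (∑ i', if f i' = f i then x i' else 0) = x i
  simp only [hf.eq_iff]
  simp [Finset.sum_ite_eq']

lemma Emap_injective {f : m → n} (hf : Function.Injective f) :
    Function.Injective (Emap f) := by
  intro x y h
  funext i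
  rw [← Emap_apply_f hf x i, ← Emap_apply_f hf y i, h]

lemma Emap_dot (f : m → n) (x : m → ℂ) (v : n → ℂ) :
    Emap f x ⬝ᵥ v = x ⬝ᵥ fun i => v (f i) := by
  show (∑ j, (∑ i, if f i = j then x i else 0) * v j) = ∑ i, x i * v (f i)
  simp only [Finset.sum_mul]
  rw [Finset.sum_comm]
  refine Finset.sum_congr rfl fun i _ => ?_
  simp only [ite_mul, zero_mul]
  simp [Finset.sum_ite_eq]

lemma star_Emap (f : m → n) (x : m → ℂ) : star (Emap f x) = Emap f (star x) := by
  funext j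
  show star (∑ i, if f i = j then x i else 0) = ∑ i, if f i = j then star x i else 0
  rw [star_sum]
  exact Finset.sum_congr rfl fun i _ => by split <;> simp

lemma Emap_form {A : Matrix n n ℂ} (f : m → n) (x : m → ℂ) :
    star (Emap f x) ⬝ᵥ A *ᵥ (Emap f x) = star x ⬝ᵥ (A.submatrix f f) *ᵥ x := by
  rw [star_Emap, Emap_dot]
  congr 1
  funext i
  show (A *ᵥ Emap f x) (f i) = ((A.submatrix f f) *ᵥ x) i
  show (fun j => A (f i) j) ⬝ᵥ Emap f x = (fun k => A (f i) (f k)) ⬝ᵥ x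
  rw [dotProduct_comm, Emap_dot, dotProduct_comm]

lemma negEig_submatrix_le {A : Matrix n n ℂ} (hA : A.IsHermitian)
    {f : m → n} (hf : Function.Injective f) :
    negEig (A.submatrix f f) ≤ negEig A := by
  have hB : (A.submatrix f f).IsHermitian := hA.submatrix f
  rw [negEig, negEig, dif_pos hB, dif_pos hA, Nat.card_eq_fintype_card,
    Nat.card_eq_fintype_card]
  obtain ⟨W, hWneg, hWrank⟩ := exists_negdef hB
  have hW'rank : Module.finrank ℂ (W.map (Emap f)) = Module.finrank ℂ W :=
    (Submodule.equivMapOfInjective (Emap f) (Emap_injective hf) W).finrank_eq.symm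
  have hle : Module.finrank ℂ (W.map (Emap f)) ≤ Fintype.card {i // hA.eigenvalues i < 0} := by
    refine finrank_le_card_neg hA _ ?_
    rintro x ⟨y, hy, rfl⟩ hne
    rw [Emap_form]
    refine hWneg y hy fun h => hne ?_
    rw [h]; exact map_zero _
  omega

lemma posEig_submatrix_le {A : Matrix n n ℂ} (hA : A.IsHermitian)
    {f : m → n} (hf : Function.Injective f) :
    posEig (A.submatrix f f) ≤ posEig A := by
  have hB : (A.submatrix f f).IsHermitian := hA.submatrix f
  rw [posEig, posEig, dif_pos hB, dif_pos hA, Nat.card_eq_fintype_card,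
    Nat.card_eq_fintype_card]
  obtain ⟨W, hWpos, hWrank⟩ := exists_posdef hB
  have hW'rank : Module.finrank ℂ (W.map (Emap f)) = Module.finrank ℂ W :=
    (Submodule.equivMapOfInjective (Emap f) (Emap_injective hf) W).finrank_eq.symm
  have hle : Module.finrank ℂ (W.map (Emap f)) ≤ Fintype.card {i // 0 < hA.eigenvalues i} := by
    refine finrank_le_card_pos hA _ ?_
    rintro x ⟨y, hy, rfl⟩ hne
    rw [Emap_form]
    refine hWpos y hy fun h => hne ?_
    rw [h]; exact map_zero _
  omega

end InertiaAux

namespace InertiaAux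

lemma sum_tt (b : ℕ → ℂ) {r s : ℕ} (hrs : r ≤ s) {i : ℕ} (j : ℕ) (hi : i < r) :
    ∑ k : Fin s, (if (k:ℕ) ≤ i then b (i - k) else 0) * star (if (k:ℕ) ≤ j then b (j - k) else 0)
      = ∑ k : Fin r,
          (if (k:ℕ) ≤ i then b (i - k) else 0) * star (if (k:ℕ) ≤ j then b (j - k) else 0) := by
  rw [Fin.sum_univ_eq_sum_range
      (fun x => (if x ≤ i then b (i - x) else 0) * star (if x ≤ j then b (j - x) else 0)) s,
    Fin.sum_univ_eq_sum_range
      (fun x => (if x ≤ i then b (i - x) else 0) * star (if x ≤ j then b (j - x) else 0)) r]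
  refine (Finset.sum_subset (Finset.range_subset_range.mpr hrs) ?_).symm
  intro x hx hxr
  have hni : ¬ x ≤ i := by simp only [Finset.mem_range] at hx hxr; omega
  simp [hni]

lemma castLE_eq_iff {r s : ℕ} (hrs : r ≤ s) (i j : Fin r) :
    (Fin.castLE hrs i = Fin.castLE hrs j) = (i = j) := by
  apply propext
  constructor
  · intro h; exact Fin.ext (by simpa using congrArg Fin.val h)
  · intro h; rw [h]

lemma oneSubTT_eq (a : ℕ → ℂ) {r s : ℕ} (hrs : r ≤ s) :
    1 - Tmat a r * (Tmat a r)ᴴ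
      = (1 - Tmat a s * (Tmat a s)ᴴ).submatrix (Fin.castLE hrs) (Fin.castLE hrs) := by
  ext i j
  simp only [Matrix.submatrix_apply, Matrix.sub_apply, Matrix.mul_apply,
    Matrix.conjTranspose_apply, Tmat, Matrix.of_apply, Matrix.one_apply, Fin.coe_castLE]
  simp only [Fin.castLE_inj]
  congr 1
  exact (sum_tt a hrs (j : ℕ) i.isLt).symm

lemma oneSubTTtil_eq (a : ℕ → ℂ) {r s : ℕ} (hrs : r ≤ s) :
    1 - Ttil a r * (Ttil a r)ᴴ
      = (1 - Ttil a s * (Ttil a s)ᴴ).submatrix (Fin.castLE hrs) (Fin.castLE hrs) := by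
  ext i j
  simp only [Matrix.submatrix_apply, Matrix.sub_apply, Matrix.mul_apply,
    Matrix.conjTranspose_apply, Ttil, Matrix.of_apply, Matrix.one_apply, Fin.coe_castLE]
  simp only [Fin.castLE_inj]
  congr 1
  exact (sum_tt (fun t => conj (a t)) hrs (j : ℕ) i.isLt).symm

lemma Gblk_eq (a : ℕ → ℂ) {r s : ℕ} (hrs : r ≤ s) :
    Gblk a r = (Gblk a s).submatrix (Sum.map (Fin.castLE hrs) (Fin.castLE hrs))
      (Sum.map (Fin.castLE hrs) (Fin.castLE hrs)) := by
  ext i j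
  cases i with
  | inl i =>
    cases j with
    | inl j =>
      have h := congrFun (congrFun (oneSubTT_eq a hrs) i) j
      simpa [Gblk, Matrix.submatrix_apply] using h
    | inr j =>
      simp [Gblk, Matrix.submatrix_apply, Qmat]
  | inr i =>
    cases j with
    | inl j =>
      simp [Gblk, Matrix.submatrix_apply, Matrix.conjTranspose_apply, Qmat]
    | inr j =>
      have h := congrFun (congrFun (oneSubTTtil_eq a hrs) i) j
      simpa [Gblk, Matrix.submatrix_apply] using h

end InertiaAux

/-- the quantities `ν(I_r − T_r T_r*)`, `π(I_r − T_r T_r*)`,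
`ν(G_r)` and `π(G_r)` are nondecreasing functions of `r`. -/




theorem negEig_posEig_monotone
    (a : ℕ → ℂ) (r s : ℕ) (hr : 1 ≤ r) (hrs : r ≤ s) :
    negEig (1 - Tmat a r * (Tmat a r)ᴴ) ≤ negEig (1 - Tmat a s * (Tmat a s)ᴴ) ∧
    posEig (1 - Tmat a r * (Tmat a r)ᴴ) ≤ posEig (1 - Tmat a s * (Tmat a s)ᴴ) ∧
    negEig (Gblk a r) ≤ negEig (Gblk a s) ∧
    posEig (Gblk a r) ≤ posEig (Gblk a s) := by
  have hBs : (1 - Tmat a s * (Tmat a s)ᴴ).IsHermitian :=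
    Matrix.isHermitian_one.sub (Matrix.isHermitian_mul_conjTranspose_self _)
  have hGs : (Gblk a s).IsHermitian := by
    refine Matrix.IsHermitian.fromBlocks ?_ rfl ?_
    · exact Matrix.isHermitian_one.sub (Matrix.isHermitian_mul_conjTranspose_self _)
    · exact Matrix.isHermitian_one.sub (Matrix.isHermitian_mul_conjTranspose_self _)
  have hc : Function.Injective (Fin.castLE hrs) :=
    fun x y h => Fin.ext (by simpa using congrArg Fin.val h)
  refine ⟨?_, ?_, ?_, ?_⟩
  · rw [InertiaAux.oneSubTT_eq a hrs]; exact InertiaAux.negEig_submatrix_le hBs hc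
  · rw [InertiaAux.oneSubTT_eq a hrs]; exact InertiaAux.posEig_submatrix_le hBs hc
  · rw [InertiaAux.Gblk_eq a hrs]; exact InertiaAux.negEig_submatrix_le hGs (hc.sumMap hc)
  · rw [InertiaAux.Gblk_eq a hrs]; exact InertiaAux.posEig_submatrix_le hGs (hc.sumMap hc)
end

section
/- Let a₀, a₁, a₂, … be complex numbers such that for some nonnegative integer κ the Hermitian matrices I_j − T_j T_j* have exactly κ negative eigenvalues for all sufficiently large j. Then there exists δ > 0 such that the power series Σ_{j=0}^∞ a_j z^j converges for all complex z with |z| < δ. -/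
open scoped Matrix ComplexConjugate

lemma dot_star_mulVec {n : ℕ} (M : Matrix (Fin n) (Fin n) ℂ) (x v : Fin n → ℂ) :
    star x ⬝ᵥ (M *ᵥ v) = star (Mᴴ *ᵥ x) ⬝ᵥ v := by
  rw [Matrix.star_mulVec, Matrix.conjTranspose_conjTranspose, Matrix.dotProduct_mulVec]

lemma quadform_spectral {n : ℕ} (A : Matrix (Fin n) (Fin n) ℂ) (hA : A.IsHermitian)
    (x : Fin n → ℂ) :
    star x ⬝ᵥ (A *ᵥ x) =
      ((∑ i, hA.eigenvalues i *
        Complex.normSq (((star (hA.eigenvectorUnitary : Matrix (Fin n) (Fin n) ℂ)) *ᵥ x) i) : ℝ) : ℂ) := by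
  set U : Matrix (Fin n) (Fin n) ℂ := (hA.eigenvectorUnitary : Matrix (Fin n) (Fin n) ℂ) with hU
  set y := (star U) *ᵥ x with hy
  have h1 : A *ᵥ x = U *ᵥ ((Matrix.diagonal (RCLike.ofReal ∘ hA.eigenvalues)) *ᵥ y) := by
    rw [hy, Matrix.mulVec_mulVec, Matrix.mulVec_mulVec]
    congr 1
    exact hA.spectral_theorem
  rw [h1, dot_star_mulVec]
  have h2 : Uᴴ = star U := rfl
  rw [h2, ← hy]
  rw [dotProduct, Complex.ofReal_sum]
  refine Finset.sum_congr rfl fun i _ => ?_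
  rw [Matrix.mulVec_diagonal]
  simp only [Pi.star_apply, Function.comp]
  rw [Complex.ofReal_mul]
  rw [Complex.normSq_eq_conj_mul_self]
  simp only [RCLike.star_def]
  exact mul_left_comm ((starRingEnd ℂ) (y i)) ((hA.eigenvalues i : ℂ)) (y i)

lemma stepA1 (a : ℕ → ℂ) (κ j : ℕ) (hj : κ + 1 ≤ j)
    (hν : negEig (1 - Tmat a j * (Tmat a j)ᴴ) ≤ κ) :
    ∃ w : Fin (κ+1) → ℂ, w ≠ 0 ∧ ∀ m < j,
      Complex.normSq (∑ s : Fin (κ+1), (if (s:ℕ) ≤ m then a (m - (s:ℕ)) else 0) * w s)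
        ≤ ∑ s : Fin (κ+1), Complex.normSq (w s) := by
  classical
  set T := Tmat a j with hT
  set H := 1 - T * Tᴴ with hHdef
  have hH : H.IsHermitian :=
    (Matrix.isHermitian_one).sub (Matrix.isHermitian_mul_conjTranspose_self T)
  have hcard : Fintype.card {i // hH.eigenvalues i < 0} ≤ Fintype.card (Fin κ) := by
    rw [Fintype.card_fin]
    have h2 := hν
    rw [negEig, dif_pos hH, Nat.card_eq_fintype_card] at h2
    exact h2
  obtain ⟨f⟩ := Function.Embedding.nonempty_of_card_le hcard
  set U : Matrix (Fin j) (Fin j) ℂ := (hH.eigenvectorUnitary : Matrix (Fin j) (Fin j) ℂ) with hUdef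
  have hemb : ∀ s : Fin (κ+1), j - 1 - (s:ℕ) < j := fun s => by omega
  set emb : Fin (κ+1) → Fin j := fun s => ⟨j - 1 - (s:ℕ), hemb s⟩ with hembdef
  have hembinj : Function.Injective emb := by
    intro s t hst
    have hs := s.isLt; have ht := t.isLt
    have h3 : j - 1 - (s:ℕ) = j - 1 - (t:ℕ) := congrArg Fin.val hst
    exact Fin.ext (by omega)
  set fc : {i // hH.eigenvalues i < 0} → Fin (κ+1) :=
    fun i => Fin.castLE (by omega) (f i) with hfcdef
  have hfcinj : Function.Injective fc := by
    intro i1 i2 h12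
    apply f.injective
    exact Fin.castLE_injective _ h12
  set G : Matrix (Fin (κ+1)) (Fin (κ+1)) ℂ := Matrix.of fun t s =>
    if h : ∃ i : {i // hH.eigenvalues i < 0}, fc i = t
      then (star U) h.choose.1 (emb s) else 0 with hGdef
  have hdet : G.det = 0 := by
    apply Matrix.det_eq_zero_of_row_eq_zero (Fin.last κ)
    intro s
    rw [hGdef]
    simp only [Matrix.of_apply]
    rw [dif_neg]
    rintro ⟨i, hi⟩
    have h4 := congrArg Fin.val hi
    simp only [hfcdef, Fin.coe_castLE, Fin.val_last] at h4
    have := (f i).isLt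
    omega
  obtain ⟨y, hy0, hGy⟩ := Matrix.exists_mulVec_eq_zero_iff.2 hdet
  set x : Fin j → ℂ := fun p => ∑ s : Fin (κ+1), if emb s = p then y s else 0 with hxdef
  -- collapsing lemma
  have hcollapse : ∀ g : Fin j → ℂ, (∑ p, g p * x p) = ∑ s : Fin (κ+1), g (emb s) * y s := by
    intro g
    rw [hxdef]
    simp only [Finset.mul_sum]
    rw [Finset.sum_comm]
    refine Finset.sum_congr rfl fun s _ => ?_
    rw [Finset.sum_congr rfl (fun p _ => mul_ite (emb s = p) (g p) (y s) 0)]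
    simp only [mul_zero]
    rw [Finset.sum_ite_eq (Finset.univ) (emb s) (fun p => g p * y s)]
    simp
  -- z vanishes on negative eigen-indices
  set z := (star U) *ᵥ x with hzdef
  have hzneg : ∀ i : {i // hH.eigenvalues i < 0}, z i.1 = 0 := by
    intro i
    have h5 : z i.1 = ∑ s : Fin (κ+1), (star U) i.1 (emb s) * y s := by
      rw [hzdef, Matrix.mulVec]
      exact hcollapse ((star U) i.1)
    have h6 : (G *ᵥ y) (fc i) = ∑ s : Fin (κ+1), (star U) i.1 (emb s) * y s := by
      rw [Matrix.mulVec]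
      refine Finset.sum_congr rfl fun s _ => ?_
      congr 1
      rw [hGdef]
      simp only [Matrix.of_apply]
      have hex : ∃ i' : {i // hH.eigenvalues i < 0}, fc i' = fc i := ⟨i, rfl⟩
      rw [dif_pos hex]
      congr 2
      exact congrArg Subtype.val (hfcinj hex.choose_spec)
    rw [h5, ← h6, hGy]
    rfl
  -- nonnegativity of the quadratic form
  have hquad : (0:ℝ) ≤ ∑ i, hH.eigenvalues i * Complex.normSq (z i) := by
    apply Finset.sum_nonneg
    intro i _
    by_cases hi : hH.eigenvalues i < 0
    · rw [hzneg ⟨i, hi⟩]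
      simp
    · exact mul_nonneg (le_of_not_gt hi) (Complex.normSq_nonneg _)
  -- the quadratic form identity
  have hq2 : star x ⬝ᵥ (H *ᵥ x) =
      ((∑ p, Complex.normSq (x p) : ℝ) : ℂ) - ((∑ k, Complex.normSq ((Tᴴ *ᵥ x) k) : ℝ) : ℂ) := by
    rw [hHdef]
    rw [Matrix.sub_mulVec, dotProduct_sub, Matrix.one_mulVec]
    congr 1
    · rw [dotProduct, Complex.ofReal_sum]
      refine Finset.sum_congr rfl fun p _ => ?_
      rw [Complex.normSq_eq_conj_mul_self]
      rfl
    · rw [← Matrix.mulVec_mulVec, dot_star_mulVec, dotProduct, Complex.ofReal_sum]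
      refine Finset.sum_congr rfl fun k _ => ?_
      rw [Complex.normSq_eq_conj_mul_self]
      rfl
  have hq3 := quadform_spectral H hH x
  have hkey : (∑ k, Complex.normSq ((Tᴴ *ᵥ x) k)) ≤ ∑ p, Complex.normSq (x p) := by
    have h7 : ((∑ p, Complex.normSq (x p) : ℝ) : ℂ) - ((∑ k, Complex.normSq ((Tᴴ *ᵥ x) k) : ℝ) : ℂ)
        = ((∑ i, hH.eigenvalues i * Complex.normSq (z i) : ℝ) : ℂ) := by
      rw [← hq2, hq3]
    rw [← Complex.ofReal_sub] at h7
    have h8 := Complex.ofReal_injective h7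
    linarith [hquad, h8.ge, h8.le]
  -- sum over x equals sum over y
  have hxy : (∑ p, Complex.normSq (x p)) = ∑ s : Fin (κ+1), Complex.normSq (y s) := by
    have himg : ∀ p ∈ Finset.univ, p ∉ Finset.univ.image emb → Complex.normSq (x p) = 0 := by
      intro p _ hp
      have : x p = 0 := by
        rw [hxdef]
        apply Finset.sum_eq_zero
        intro s _
        rw [if_neg]
        intro hc
        exact hp (Finset.mem_image.2 ⟨s, Finset.mem_univ s, hc⟩)
      rw [this]; simp
    rw [← Finset.sum_subset (Finset.subset_univ (Finset.univ.image emb)) himg]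
    rw [Finset.sum_image (fun s _ t _ h => hembinj h)]
    refine Finset.sum_congr rfl fun s _ => ?_
    congr 1
    show (∑ t : Fin (κ+1), if emb t = emb s then y t else 0) = y s
    rw [Finset.sum_eq_single s (fun t _ ht => if_neg (fun hc => ht (hembinj hc)))
      (fun h => absurd (Finset.mem_univ s) h), if_pos rfl]
  -- the convolution identity
  refine ⟨star y, fun hw => hy0 (by simpa using congrArg star hw), fun m hm => ?_⟩
  set k : Fin j := ⟨j - 1 - m, by omega⟩ with hkdef
  have hTx : (Tᴴ *ᵥ x) k =
      conj (∑ s : Fin (κ+1), (if (s:ℕ) ≤ m then a (m - (s:ℕ)) else 0) * (star y) s) := by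
    have h9 : (Tᴴ *ᵥ x) k = ∑ s : Fin (κ+1), Tᴴ k (emb s) * y s := by
      rw [Matrix.mulVec]
      exact hcollapse (Tᴴ k)
    rw [h9, map_sum]
    refine Finset.sum_congr rfl fun s _ => ?_
    have hs := s.isLt
    have hTval : Tᴴ k (emb s) = conj (if (s:ℕ) ≤ m then a (m - (s:ℕ)) else 0) := by
      rw [Matrix.conjTranspose_apply, RCLike.star_def]
      congr 1
      show (if ((k:ℕ)) ≤ ((emb s : Fin j):ℕ) then a (((emb s : Fin j):ℕ) - (k:ℕ)) else 0) = _
      have hk1 : (k:ℕ) = j - 1 - m := rfl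
      have he1 : ((emb s : Fin j):ℕ) = j - 1 - (s:ℕ) := rfl
      rw [hk1, he1]
      by_cases hsm : (s:ℕ) ≤ m
      · rw [if_pos (by omega), if_pos hsm]
        congr 1
        omega
      · rw [if_neg (by omega), if_neg hsm]
    rw [hTval, map_mul]
    congr 1
    simp
  have hterm : Complex.normSq ((Tᴴ *ᵥ x) k) ≤ ∑ k', Complex.normSq ((Tᴴ *ᵥ x) k') :=
    Finset.single_le_sum (fun k' _ => Complex.normSq_nonneg _) (Finset.mem_univ k)
  rw [hTx, Complex.normSq_conj] at hterm
  have hy' : (∑ s : Fin (κ+1), Complex.normSq (y s)) = ∑ s : Fin (κ+1), Complex.normSq ((star y) s) := by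
    refine Finset.sum_congr rfl fun s _ => ?_
    simp [Complex.normSq_conj]
  linarith [hterm, hkey, hxy.le, hxy.ge, hy'.le, hy'.ge]

lemma stepA (a : ℕ → ℂ) (κ : ℕ)
    (h : ∀ j : ℕ, κ + 1 ≤ j → ∃ w : Fin (κ+1) → ℂ, w ≠ 0 ∧ ∀ m < j,
      Complex.normSq (∑ s : Fin (κ+1), (if (s:ℕ) ≤ m then a (m - (s:ℕ)) else 0) * w s)
        ≤ ∑ s : Fin (κ+1), Complex.normSq (w s)) :
    ∃ w : Fin (κ+1) → ℂ, ‖w‖ = 1 ∧ ∀ m : ℕ,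
      Complex.normSq (∑ s : Fin (κ+1), (if (s:ℕ) ≤ m then a (m - (s:ℕ)) else 0) * w s)
        ≤ κ + 1 := by
  classical
  -- normalized witnesses
  have hall : ∀ j : ℕ, ∃ w : Fin (κ+1) → ℂ, ‖w‖ = 1 ∧ ∀ m < j,
      Complex.normSq (∑ s : Fin (κ+1), (if (s:ℕ) ≤ m then a (m - (s:ℕ)) else 0) * w s)
        ≤ ∑ s : Fin (κ+1), Complex.normSq (w s) := by
    intro j
    obtain ⟨w, hw0, hw⟩ := h (max j (κ+1)) (le_max_right _ _)
    have hc : (0:ℝ) < ‖w‖ := norm_pos_iff.2 hw0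
    refine ⟨(‖w‖⁻¹ : ℝ) • w, ?_, ?_⟩
    · rw [norm_smul, Real.norm_eq_abs, abs_of_pos (inv_pos.2 hc), inv_mul_cancel₀ hc.ne']
    · intro m hm
      have hscale : ∀ s : Fin (κ+1), ((‖w‖⁻¹ : ℝ) • w) s = ((‖w‖⁻¹ : ℝ) : ℂ) * w s := by
        intro s
        simp [Complex.real_smul]
      have h1 : (∑ s : Fin (κ+1), (if (s:ℕ) ≤ m then a (m - (s:ℕ)) else 0) * ((‖w‖⁻¹ : ℝ) • w) s)
          = ((‖w‖⁻¹ : ℝ) : ℂ) * ∑ s : Fin (κ+1), (if (s:ℕ) ≤ m then a (m - (s:ℕ)) else 0) * w s := by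
        rw [Finset.mul_sum]
        refine Finset.sum_congr rfl fun s _ => ?_
        rw [hscale s]; ring
      have h2 : (∑ s : Fin (κ+1), Complex.normSq (((‖w‖⁻¹ : ℝ) • w) s))
          = (‖w‖⁻¹ * ‖w‖⁻¹) * ∑ s : Fin (κ+1), Complex.normSq (w s) := by
        rw [Finset.mul_sum]
        refine Finset.sum_congr rfl fun s _ => ?_
        rw [hscale s, map_mul, Complex.normSq_ofReal]
      rw [h1, map_mul, Complex.normSq_ofReal, h2]
      exact mul_le_mul_of_nonneg_left (hw m (lt_of_lt_of_le hm (le_max_left _ _)))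
        (mul_nonneg (inv_nonneg.2 hc.le) (inv_nonneg.2 hc.le))
  set u : ℕ → (Fin (κ+1) → ℂ) := fun j => (hall j).choose with hu
  have hu1 : ∀ j, ‖u j‖ = 1 := fun j => (hall j).choose_spec.1
  have hu2 : ∀ j, ∀ m < j, Complex.normSq (∑ s : Fin (κ+1),
      (if (s:ℕ) ≤ m then a (m - (s:ℕ)) else 0) * u j s) ≤ κ + 1 := by
    intro j m hm
    refine le_trans ((hall j).choose_spec.2 m hm) ?_
    have : ∀ s : Fin (κ+1), Complex.normSq (u j s) ≤ 1 := by
      intro s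
      have h3 := norm_le_pi_norm (u j) s
      rw [hu1 j] at h3
      rw [Complex.normSq_eq_norm_sq]
      calc ‖u j s‖ ^ 2 = ‖u j s‖ ^ 2 := rfl
        _ ≤ 1 ^ 2 := pow_le_pow_left₀ (norm_nonneg _) h3 2
        _ = 1 := one_pow 2
    calc (∑ s : Fin (κ+1), Complex.normSq (u j s)) ≤ ∑ _s : Fin (κ+1), (1:ℝ) :=
          Finset.sum_le_sum (fun s _ => this s)
      _ = κ + 1 := by simp
  have hmem : ∀ j, u j ∈ Metric.sphere (0 : Fin (κ+1) → ℂ) 1 := by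
    intro j
    rw [mem_sphere_zero_iff_norm]
    exact hu1 j
  obtain ⟨w, hwmem, φ, hφ, hconv⟩ :=
    (isCompact_sphere (0 : Fin (κ+1) → ℂ) 1).tendsto_subseq hmem
  refine ⟨w, mem_sphere_zero_iff_norm.1 hwmem, fun m => ?_⟩
  have hF : Continuous (fun v : Fin (κ+1) → ℂ =>
      Complex.normSq (∑ s : Fin (κ+1), (if (s:ℕ) ≤ m then a (m - (s:ℕ)) else 0) * v s)) := by
    apply Complex.continuous_normSq.comp
    exact continuous_finset_sum _ fun s _ => (continuous_const.mul (continuous_apply s))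
  have htend := (hF.tendsto w).comp hconv
  refine le_of_tendsto htend ?_
  filter_upwards [Filter.eventually_ge_atTop (m+1)] with n hn
  exact hu2 (φ n) m (lt_of_lt_of_le (Nat.lt_succ_of_le (le_refl m)) (hn.trans hφ.le_apply))

lemma stepB (a : ℕ → ℂ) (κ : ℕ) (w : Fin (κ+1) → ℂ) (hw1 : ‖w‖ = 1)
    (hb : ∀ m : ℕ, Complex.normSq (∑ s : Fin (κ+1),
      (if (s:ℕ) ≤ m then a (m - (s:ℕ)) else 0) * w s) ≤ κ + 1) :
    ∃ A D : ℝ, 0 < D ∧ 0 ≤ A ∧ ∀ n, ‖a n‖ ≤ A * D ^ n := by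
  classical
  set C : ℝ := Real.sqrt (κ + 1) with hC
  have hC0 : 0 ≤ C := Real.sqrt_nonneg _
  set b : ℕ → ℂ := fun m => ∑ s : Fin (κ+1),
      (if (s:ℕ) ≤ m then a (m - (s:ℕ)) else 0) * w s with hbdef
  have hbC : ∀ m, ‖b m‖ ≤ C := by
    intro m
    rw [Complex.norm_def, hC]
    exact Real.sqrt_le_sqrt (hb m)
  -- least index with w nonzero
  have hw0 : w ≠ 0 := by
    intro h0
    rw [h0] at hw1
    simp at hw1
  have hex : ∃ nt : ℕ, ∃ hnt : nt < κ + 1, w ⟨nt, hnt⟩ ≠ 0 := by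
    obtain ⟨s, hs⟩ := Function.ne_iff.1 hw0
    exact ⟨s.1, s.isLt, by simpa using hs⟩
  set t : ℕ := Nat.find hex with htdef
  obtain ⟨hlt, hwt⟩ := Nat.find_spec hex
  have hmin : ∀ s : Fin (κ+1), (s:ℕ) < t → w s = 0 := by
    intro s hs
    have := Nat.find_min hex hs
    push_neg at this
    have h2 := this s.isLt
    simpa using h2
  set t' : Fin (κ+1) := ⟨t, hlt⟩ with ht'def
  set ε : ℝ := ‖w t'‖ with hεdef
  have hε0 : 0 < ε := by
    rw [hεdef]
    exact norm_pos_iff.2 hwt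
  have hws : ∀ s : Fin (κ+1), ‖w s‖ ≤ 1 := by
    intro s
    have h3 := norm_le_pi_norm w s
    rw [hw1] at h3
    exact h3
  -- the recursion
  set A : ℝ := (C + 1)/ε + 1 with hA
  set D : ℝ := (C + (κ+1) * A)/ε + 1 with hD
  have hA1 : 1 ≤ A := by
    rw [hA]
    have : 0 ≤ (C + 1)/ε := div_nonneg (by linarith) hε0.le
    linarith
  have hD1 : 1 ≤ D := by
    rw [hD]
    have : 0 ≤ (C + (κ+1) * A)/ε := div_nonneg (by positivity) hε0.le
    linarith
  refine ⟨A, D, by linarith, by linarith, ?_⟩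
  intro n
  induction n using Nat.strong_induction_on with
  | _ n ih =>
    -- b (n + t) = a n * w t' + rest
    have hsplit : b (n + t) = (a n) * w t' +
        ∑ s ∈ Finset.univ.erase t', (if (s:ℕ) ≤ n + t then a (n + t - (s:ℕ)) else 0) * w s := by
      show (∑ s : Fin (κ+1), (if (s:ℕ) ≤ n + t then a (n + t - (s:ℕ)) else 0) * w s) = _
      rw [← Finset.add_sum_erase Finset.univ _ (Finset.mem_univ t')]
      congr 2
      rw [if_pos (show ((t' : Fin (κ+1)):ℕ) ≤ n + t from by show t ≤ n + t; omega)]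
      show a (n + t - t) = a n
      congr 1
      omega
    have hrest : ∀ s ∈ Finset.univ.erase t',
        ‖(if (s:ℕ) ≤ n + t then a (n + t - (s:ℕ)) else 0) * w s‖
          ≤ A * D ^ (n - 1) * (if n = 0 then 0 else 1) := by
      intro s hs
      have hsne : s ≠ t' := (Finset.mem_erase.1 hs).1
      rcases lt_trichotomy ((s:ℕ)) t with hlt2 | heq | hgt
      · rw [hmin s hlt2, mul_zero]
        simp only [norm_zero]
        positivity
      · exact absurd (Fin.ext (by simpa [ht'def] using heq)) hsne
      · by_cases hle : (s:ℕ) ≤ n + t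
        · have hn0 : n ≠ 0 := by omega
          rw [if_pos hle, if_neg hn0, norm_mul, mul_one]
          have hidx : n + t - (s:ℕ) < n := by omega
          have h4 := ih (n + t - (s:ℕ)) hidx
          calc ‖a (n + t - (s:ℕ))‖ * ‖w s‖
              ≤ (A * D ^ (n + t - (s:ℕ))) * 1 :=
                mul_le_mul h4 (hws s) (norm_nonneg _) (by positivity)
            _ = A * D ^ (n + t - (s:ℕ)) := mul_one _
            _ ≤ A * D ^ (n - 1) := by
                apply mul_le_mul_of_nonneg_left _ (by linarith)
                exact pow_le_pow_right₀ hD1 (by omega)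
        · rw [if_neg hle, zero_mul]
          simp only [norm_zero]
          positivity
    have habs : ε * ‖a n‖ ≤ C +
        (κ+1) * (A * D ^ (n - 1) * (if n = 0 then 0 else 1)) := by
      have h5 : (a n) * w t' = b (n + t) -
          ∑ s ∈ Finset.univ.erase t', (if (s:ℕ) ≤ n + t then a (n + t - (s:ℕ)) else 0) * w s := by
        rw [hsplit]; ring
      have h6 : ε * ‖a n‖ = ‖(a n) * w t'‖ := by
        rw [norm_mul]; ring
      rw [h6, h5]
      calc ‖_‖ ≤ ‖b (n + t)‖ +
            ‖∑ s ∈ Finset.univ.erase t',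
              (if (s:ℕ) ≤ n + t then a (n + t - (s:ℕ)) else 0) * w s‖ := by
            exact (norm_sub_le _ _)
        _ ≤ C + (κ+1) * (A * D ^ (n - 1) * (if n = 0 then 0 else 1)) := by
            apply add_le_add (hbC _)
            calc ‖∑ s ∈ Finset.univ.erase t', _‖
                ≤ ∑ s ∈ Finset.univ.erase t', ‖
                  (if (s:ℕ) ≤ n + t then a (n + t - (s:ℕ)) else 0) * w s‖ := by
                  exact norm_sum_le _ _
              _ ≤ ∑ _s ∈ Finset.univ.erase t', A * D ^ (n - 1) * (if n = 0 then 0 else 1) :=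
                  Finset.sum_le_sum hrest
              _ ≤ (κ+1) * (A * D ^ (n - 1) * (if n = 0 then 0 else 1)) := by
                  rw [Finset.sum_const, nsmul_eq_mul]
                  apply mul_le_mul_of_nonneg_right _ (by positivity)
                  have : (Finset.univ.erase t').card ≤ κ + 1 := by
                    calc (Finset.univ.erase t').card ≤ Finset.univ.card :=
                        Finset.card_le_card (Finset.erase_subset _ _)
                      _ = κ + 1 := by simp
                  exact_mod_cast Nat.cast_le.2 this
      -- done
    by_cases hn0 : n = 0
    · subst hn0
      rw [if_pos rfl] at habs
      simp only [mul_zero, add_zero] at habs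
      have : ‖a 0‖ ≤ C / ε := by
        rw [le_div_iff₀ hε0]
        linarith [habs]
      calc ‖a 0‖ ≤ C / ε := this
        _ ≤ A * D ^ 0 := by
            rw [pow_zero, mul_one, hA]
            have h7 : C / ε ≤ (C + 1)/ε := by gcongr; linarith
            linarith
    · rw [if_neg hn0, mul_one] at habs
      have hDn : (1:ℝ) ≤ D ^ (n-1) := one_le_pow₀ hD1
      have h8 : ε * ‖a n‖ ≤ (C + (κ+1) * A) * D ^ (n-1) := by
        calc ε * ‖a n‖ ≤ C + (κ+1) * (A * D ^ (n-1)) := habs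
          _ ≤ C * D ^ (n-1) + (κ+1) * A * D ^ (n-1) := by nlinarith
          _ = (C + (κ+1) * A) * D ^ (n-1) := by ring
      have h9 : (C + (κ+1) * A) * D ^ (n-1) ≤ ε * (A * D ^ n) := by
        have h10 : (C + (κ+1) * A) = ε * (D - 1) := by
          rw [hD]; field_simp; ring
        rw [h10]
        have h11 : D ^ n = D ^ (n-1) * D := by
          rw [← pow_succ]
          congr 1
          omega
        rw [h11]
        have hY : (0:ℝ) ≤ D ^ (n-1) * D := mul_nonneg (by positivity) (by linarith)
        calc ε * (D - 1) * D ^ (n-1) ≤ ε * (1 * (D ^ (n-1) * D)) := by nlinarith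
          _ ≤ ε * (A * (D ^ (n-1) * D)) :=
            mul_le_mul_of_nonneg_left (mul_le_mul_of_nonneg_right hA1 hY) hε0.le
      have := le_trans h8 h9
      exact le_of_mul_le_mul_left this hε0


/-- if the matrices `I_j − T_j T_j*` have exactly `κ` negative
eigenvalues for all sufficiently large `j`, then the power series
`Σ a_j z^j` converges in a disk `|z| < δ` for some `δ > 0`. -/
theorem powerSeries_converges_of_eventually_negEig_eq
    (a : ℕ → ℂ) (κ : ℕ)
    (h : ∃ N, ∀ j ≥ N, negEig (1 - Tmat a j * (Tmat a j)ᴴ) = κ) :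
    ∃ δ : ℝ, 0 < δ ∧ ∀ z : ℂ, ‖z‖ < δ →
      ∃ L : ℂ, Filter.Tendsto (fun m => ∑ j ∈ Finset.range m, a j * z ^ j)
        Filter.atTop (nhds L) := by
  obtain ⟨N, hN⟩ := h
  have hstep : ∀ j : ℕ, κ + 1 ≤ j → ∃ w : Fin (κ+1) → ℂ, w ≠ 0 ∧ ∀ m < j,
      Complex.normSq (∑ s : Fin (κ+1), (if (s:ℕ) ≤ m then a (m - (s:ℕ)) else 0) * w s)
        ≤ ∑ s : Fin (κ+1), Complex.normSq (w s) := by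
    intro j hj
    obtain ⟨w, hw0, hw⟩ := stepA1 a κ (max j N) (le_trans hj (le_max_left _ _))
      (le_of_eq (hN (max j N) (le_max_right _ _)))
    exact ⟨w, hw0, fun m hm => hw m (lt_of_lt_of_le hm (le_max_left _ _))⟩
  obtain ⟨w, hw1, hb⟩ := stepA a κ hstep
  obtain ⟨A, D, hD0, hA0, hbound⟩ := stepB a κ w hw1 hb
  refine ⟨D⁻¹, inv_pos.2 hD0, fun z hz => ?_⟩
  have hsum : Summable (fun j => a j * z ^ j) := by
    apply Summable.of_norm
    have hr0 : 0 ≤ D * ‖z‖ := mul_nonneg hD0.le (norm_nonneg _)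
    have hr1 : D * ‖z‖ < 1 := by
      calc D * ‖z‖ < D * D⁻¹ := mul_lt_mul_of_pos_left hz hD0
        _ = 1 := mul_inv_cancel₀ hD0.ne'
    apply Summable.of_nonneg_of_le (fun j => norm_nonneg _) (fun j => ?_)
      ((summable_geometric_of_lt_one hr0 hr1).mul_left A)
    show ‖a j * z ^ j‖ ≤ A * (D * ‖z‖) ^ j
    rw [norm_mul, norm_pow]
    calc ‖a j‖ * ‖z‖ ^ j ≤ (A * D ^ j) * ‖z‖ ^ j :=
          mul_le_mul_of_nonneg_right (hbound j) (by positivity)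
      _ = A * (D * ‖z‖) ^ j := by
          rw [mul_pow]
          ring
  exact ⟨∑' j, a j * z ^ j, hsum.hasSum.tendsto_sum_nat⟩
end
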